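/- arXiv:1308.3303 — 5 statements merged into one kernel-verified Lean document; each statement's English description precedes it below -/
import Mathlib

section
/- Let (Ω, F, P) be a probability space, E ∈ F an event, and R : Ω → ℝ a random variable whose law has a density g (with respect to Lebesgue measure). Let f_u : ℝ → [0, ∞) be a measurable function such that for every Borel set A ⊆ ℝ one has P(E ∩ {R ∈ A}) ≤ ∫_A f_u(r) g(r) dr. Then P(E) ≤ ∫_ℝ min{f_u(r), 1} g(r) dr. -/
open MeasureTheory

/-- **Tightest form of the parameterized Gallager first bounding technique.**
If the law of the parameter `R` has density `g` w.r.t. Lebesgue measure and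
`f_u` is a nonnegative measurable function such that
`P(E ∩ {R ∈ A}) ≤ ∫_A f_u g` for every Borel set `A`, then
`P(E) ≤ ∫_ℝ min{f_u(r), 1} g(r) dr`. -/
theorem parameterized_GFBT_tightest
    {Ω : Type*} [MeasurableSpace Ω] (P : Measure Ω) [IsProbabilityMeasure P]
    (E : Set Ω) (hE : MeasurableSet E)
    (R : Ω → ℝ) (hR : Measurable R)
    (g : ℝ → ℝ) (hg_meas : Measurable g) (hg_nonneg : ∀ r, 0 ≤ g r)
    (hlaw : Measure.map R P = volume.withDensity fun r => ENNReal.ofReal (g r))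
    (fu : ℝ → ℝ) (hfu_meas : Measurable fu) (hfu_nonneg : ∀ r, 0 ≤ fu r)
    (hbound : ∀ A : Set ℝ, MeasurableSet A →
      (P (E ∩ R ⁻¹' A)).toReal ≤ ∫ r in A, fu r * g r) :
    (P E).toReal ≤ ∫ r, min (fu r) 1 * g r := by
  set A : Set ℝ := {r | fu r ≤ 1} with hA
  have hAmeas : MeasurableSet A := measurableSet_le hfu_meas measurable_const
  -- g is integrable with integral 1
  have hlin : ∫⁻ r, ENNReal.ofReal (g r) = 1 := by
    have := congrArg (fun μ : Measure ℝ => μ Set.univ) hlaw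
    simpa [Measure.map_apply hR MeasurableSet.univ] using this.symm
  have hg_int : Integrable g volume := by
    refine ⟨hg_meas.aestronglyMeasurable, ?_⟩
    rw [hasFiniteIntegral_iff_ofReal (Filter.Eventually.of_forall hg_nonneg)]
    simp [hlin]
  have hmin_nonneg : ∀ r, 0 ≤ min (fu r) 1 * g r := fun r =>
    mul_nonneg (le_min (hfu_nonneg r) one_pos.le) (hg_nonneg r)
  have hh_meas : Measurable fun r => min (fu r) 1 * g r :=
    (hfu_meas.min measurable_const).mul hg_meas
  have hh_int : Integrable (fun r => min (fu r) 1 * g r) volume := by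
    refine hg_int.mono' hh_meas.aestronglyMeasurable ?_
    refine Filter.Eventually.of_forall fun r => ?_
    rw [Real.norm_eq_abs, abs_of_nonneg (hmin_nonneg r)]
    calc min (fu r) 1 * g r ≤ 1 * g r :=
          mul_le_mul_of_nonneg_right (min_le_right _ _) (hg_nonneg r)
      _ = g r := one_mul _
  -- law computation
  have hmap : ∀ B : Set ℝ, MeasurableSet B → (P (R ⁻¹' B)).toReal = ∫ r in B, g r := by
    intro B hB
    have h1 : P (R ⁻¹' B) = ∫⁻ r in B, ENNReal.ofReal (g r) := by
      rw [← Measure.map_apply hR hB, hlaw, withDensity_apply _ hB]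
    rw [h1, integral_eq_lintegral_of_nonneg_ae
      (Filter.Eventually.of_forall hg_nonneg) hg_meas.aestronglyMeasurable]
  -- split P E
  have hsplit : (P E).toReal
      = (P (E ∩ R ⁻¹' A)).toReal + (P (E ∩ R ⁻¹' Aᶜ)).toReal := by
    have hdiff : E \ R ⁻¹' A = E ∩ R ⁻¹' Aᶜ := by
      rw [Set.diff_eq, Set.preimage_compl]
    rw [← measure_inter_add_diff E (hR hAmeas), hdiff,
      ENNReal.toReal_add (measure_ne_top P _) (measure_ne_top P _)]
  -- first piece
  have hb1 : (P (E ∩ R ⁻¹' A)).toReal ≤ ∫ r in A, min (fu r) 1 * g r := by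
    have := hbound A hAmeas
    have heq : ∫ r in A, fu r * g r = ∫ r in A, min (fu r) 1 * g r := by
      refine setIntegral_congr_fun hAmeas fun r hr => ?_
      rw [min_eq_left (show fu r ≤ 1 from hr)]
    linarith
  -- second piece
  have hb2 : (P (E ∩ R ⁻¹' Aᶜ)).toReal ≤ ∫ r in Aᶜ, min (fu r) 1 * g r := by
    have hle : (P (E ∩ R ⁻¹' Aᶜ)).toReal ≤ (P (R ⁻¹' Aᶜ)).toReal :=
      ENNReal.toReal_mono (measure_ne_top P _) (measure_mono Set.inter_subset_right)
    have heq : ∫ r in Aᶜ, g r = ∫ r in Aᶜ, min (fu r) 1 * g r := by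
      refine setIntegral_congr_fun hAmeas.compl fun r hr => ?_
      have : ¬ fu r ≤ 1 := hr
      rw [min_eq_right (le_of_lt (lt_of_not_ge this)), one_mul]
    calc (P (E ∩ R ⁻¹' Aᶜ)).toReal ≤ (P (R ⁻¹' Aᶜ)).toReal := hle
      _ = ∫ r in Aᶜ, g r := hmap Aᶜ hAmeas.compl
      _ = ∫ r in Aᶜ, min (fu r) 1 * g r := heq
  have htot : (∫ r in A, min (fu r) 1 * g r) + ∫ r in Aᶜ, min (fu r) 1 * g r
      = ∫ r, min (fu r) 1 * g r :=
    integral_add_compl hAmeas hh_int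
  rw [hsplit, ← htot]
  exact add_le_add hb1 hb2
end

section
/- Let g : ℝ → [0, ∞) be Lebesgue-integrable and let f_u : ℝ → [0, ∞) be nondecreasing and measurable. Define Φ(t) = ∫_{-∞}^{t} f_u(r) g(r) dr + ∫_{t}^{+∞} g(r) dr for t ∈ ℝ. If r₁ ∈ ℝ satisfies f_u(r₁) = 1, then Φ(r₁) ≤ Φ(t) for all t ∈ ℝ; that is, any solution of f_u(r) = 1 is a global minimizer of the parameterized Gallager first bound Φ. -/
open MeasureTheory

/-- Any solution of `f_u(r) = 1` is a global minimizer of the parameterized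
Gallager first bound `Φ(t) = ∫_{-∞}^{t} f_u(r) g(r) dr + ∫_{t}^{∞} g(r) dr`,
when `f_u` is nondecreasing, nonnegative and measurable, and `g` is a
nonnegative Lebesgue-integrable function. -/
theorem solution_of_fu_eq_one_minimizes_GFBT
    (g : ℝ → ℝ) (hg_nonneg : ∀ r, 0 ≤ g r) (hg_int : Integrable g)
    (fu : ℝ → ℝ) (hfu_nonneg : ∀ r, 0 ≤ fu r) (hfu_mono : Monotone fu)
    (hfu_meas : Measurable fu)
    (Φ : ℝ → ℝ)
    (hΦ : ∀ t, Φ t = (∫ r in Set.Iic t, fu r * g r) + ∫ r in Set.Ioi t, g r)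
    (r₁ : ℝ) (hr₁ : fu r₁ = 1) :
    ∀ t : ℝ, Φ r₁ ≤ Φ t := by
  have hfg_int : ∀ t : ℝ, IntegrableOn (fun r => fu r * g r) (Set.Iic t) := by
    intro t
    have hmeas : AEStronglyMeasurable (fun r => fu r * g r)
        (volume.restrict (Set.Iic t)) :=
      (hfu_meas.aestronglyMeasurable.mul hg_int.1).restrict
    have hb : ∀ᵐ r ∂(volume.restrict (Set.Iic t)),
        ‖fu r * g r‖ ≤ ‖fu t * g r‖ := by
      refine (ae_restrict_iff' measurableSet_Iic).2 (ae_of_all _ ?_)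
      intro r hr
      rw [norm_mul, norm_mul]
      have h1 : ‖fu r‖ ≤ ‖fu t‖ := by
        rw [Real.norm_of_nonneg (hfu_nonneg r), Real.norm_of_nonneg (hfu_nonneg t)]
        exact hfu_mono hr
      exact mul_le_mul_of_nonneg_right h1 (norm_nonneg _)
    exact Integrable.mono ((hg_int.const_mul (fu t)).integrableOn) hmeas hb
  intro t
  rw [hΦ, hΦ]
  rcases le_total r₁ t with h | h
  · have h1 : (∫ r in Set.Iic t, fu r * g r)
        = (∫ r in Set.Iic r₁, fu r * g r) + ∫ r in Set.Ioc r₁ t, fu r * g r := by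
      rw [← setIntegral_union (Set.Iic_disjoint_Ioc le_rfl) measurableSet_Ioc
        ((hfg_int r₁)) ((hfg_int t).mono_set Set.Ioc_subset_Iic_self),
        Set.Iic_union_Ioc_eq_Iic h]
    have h2 : (∫ r in Set.Ioi r₁, g r)
        = (∫ r in Set.Ioc r₁ t, g r) + ∫ r in Set.Ioi t, g r := by
      rw [← setIntegral_union (Set.Ioc_disjoint_Ioi le_rfl) measurableSet_Ioi
        hg_int.integrableOn hg_int.integrableOn, Set.Ioc_union_Ioi_eq_Ioi h]
    rw [h1, h2]
    have key : (∫ r in Set.Ioc r₁ t, g r) ≤ ∫ r in Set.Ioc r₁ t, fu r * g r := by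
      refine setIntegral_mono_on hg_int.integrableOn
        ((hfg_int t).mono_set Set.Ioc_subset_Iic_self) measurableSet_Ioc ?_
      intro r hr
      have : (1 : ℝ) ≤ fu r := hr₁ ▸ hfu_mono hr.1.le
      exact le_mul_of_one_le_left (hg_nonneg r) this
    linarith
  · have h1 : (∫ r in Set.Iic r₁, fu r * g r)
        = (∫ r in Set.Iic t, fu r * g r) + ∫ r in Set.Ioc t r₁, fu r * g r := by
      rw [← setIntegral_union (Set.Iic_disjoint_Ioc le_rfl) measurableSet_Ioc
        ((hfg_int t)) ((hfg_int r₁).mono_set Set.Ioc_subset_Iic_self),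
        Set.Iic_union_Ioc_eq_Iic h]
    have h2 : (∫ r in Set.Ioi t, g r)
        = (∫ r in Set.Ioc t r₁, g r) + ∫ r in Set.Ioi r₁, g r := by
      rw [← setIntegral_union (Set.Ioc_disjoint_Ioi le_rfl) measurableSet_Ioi
        hg_int.integrableOn hg_int.integrableOn, Set.Ioc_union_Ioi_eq_Ioi h]
    rw [h1, h2]
    have key : (∫ r in Set.Ioc t r₁, fu r * g r) ≤ ∫ r in Set.Ioc t r₁, g r := by
      refine setIntegral_mono_on
        ((hfg_int r₁).mono_set Set.Ioc_subset_Iic_self) hg_int.integrableOn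
        measurableSet_Ioc ?_
      intro r hr
      have : fu r ≤ 1 := hr₁ ▸ hfu_mono hr.2
      exact mul_le_of_le_one_left (hg_nonneg r) this
    linarith
end

section
/- Fix an integer n ≥ 1 and for each σ > 0 let g_σ(r) = 2 r^{n−1} e^{−r²/(2σ²)} / (2^{n/2} σⁿ Γ(n/2)) for r ≥ 0 (and g_σ(r) = 0 for r < 0). Let f_u : ℝ → [0, ∞) be nondecreasing and measurable (independent of σ), and suppose r₁ ∈ ℝ satisfies f_u(r₁) = 1. Then for every σ > 0, r₁ minimizes Φ_σ(t) = ∫_{-∞}^{t} f_u(r) g_σ(r) dr + ∫_{t}^{+∞} g_σ(r) dr over t ∈ ℝ. In particular, the optimal parameter of the sphere bound does not depend on the signal-to-noise ratio. -/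
open MeasureTheory

/-- The density of the norm of an `n`-dimensional Gaussian noise vector with
independent coordinates of mean `0` and variance `σ²`:
`g_σ(r) = 2 r^{n-1} e^{-r²/(2σ²)} / (2^{n/2} σⁿ Γ(n/2))` for `r ≥ 0`, and `0`
for `r < 0`. -/
noncomputable def chiDensity (n : ℕ) (σ : ℝ) (r : ℝ) : ℝ :=
  if 0 ≤ r then
    2 * r ^ (n - 1) * Real.exp (-(r ^ 2) / (2 * σ ^ 2)) /
      ((2 : ℝ) ^ ((n : ℝ) / 2) * σ ^ n * Real.Gamma ((n : ℝ) / 2))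
  else 0

lemma chiDensity_nonneg (n : ℕ) {σ : ℝ} (hσ : 0 < σ) (r : ℝ) : 0 ≤ chiDensity n σ r := by
  unfold chiDensity
  split
  · rename_i h
    have hG : 0 ≤ Real.Gamma ((n : ℝ) / 2) := Real.Gamma_nonneg_of_nonneg (by positivity)
    exact div_nonneg (by positivity)
      (mul_nonneg (mul_nonneg (by positivity) (by positivity)) hG)
  · exact le_refl 0

lemma chiDensity_measurable (n : ℕ) (σ : ℝ) : Measurable (chiDensity n σ) := by
  unfold chiDensity
  exact Measurable.ite measurableSet_Ici (by fun_prop) measurable_const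

lemma chiDensity_integrable (n : ℕ) {σ : ℝ} (hσ : 0 < σ) :
    Integrable (chiDensity n σ) := by
  have hb : (0:ℝ) < 1 / (2 * σ ^ 2) := by positivity
  have hs : (-1:ℝ) < ((n - 1 : ℕ) : ℝ) := lt_of_lt_of_le (by norm_num) (Nat.cast_nonneg _)
  have h1 : Integrable (fun r : ℝ =>
      r ^ (((n - 1 : ℕ) : ℝ)) * Real.exp (-(1 / (2 * σ ^ 2)) * r ^ 2)) :=
    integrable_rpow_mul_exp_neg_mul_sq hb hs
  set C : ℝ := 2 / ((2 : ℝ) ^ ((n : ℝ) / 2) * σ ^ n * Real.Gamma ((n : ℝ) / 2)) with hC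
  have h2 : Integrable (fun r : ℝ =>
      |C * (r ^ (((n - 1 : ℕ) : ℝ)) * Real.exp (-(1 / (2 * σ ^ 2)) * r ^ 2))|) :=
    (h1.const_mul C).abs
  refine h2.mono' (chiDensity_measurable n σ).aestronglyMeasurable ?_
  refine Filter.Eventually.of_forall fun r => ?_
  rw [Real.norm_eq_abs, abs_of_nonneg (chiDensity_nonneg n hσ r)]
  unfold chiDensity
  split
  · rename_i h
    have hrpow : r ^ (((n - 1 : ℕ) : ℝ)) = r ^ (n - 1 : ℕ) := Real.rpow_natCast r (n - 1)
    have heq : 2 * r ^ (n - 1) * Real.exp (-(r ^ 2) / (2 * σ ^ 2)) /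
        ((2 : ℝ) ^ ((n : ℝ) / 2) * σ ^ n * Real.Gamma ((n : ℝ) / 2)) =
        C * (r ^ (((n - 1 : ℕ) : ℝ)) * Real.exp (-(1 / (2 * σ ^ 2)) * r ^ 2)) := by
      rw [hC, hrpow]
      have : -(r ^ 2) / (2 * σ ^ 2) = -(1 / (2 * σ ^ 2)) * r ^ 2 := by ring
      rw [this]
      ring
    rw [heq]
    exact le_abs_self _
  · positivity

/-- If `f_u` is nondecreasing, nonnegative, measurable and independent of `σ`,
and `f_u(r₁) = 1`, then for every `σ > 0` the parameter `r₁` minimizes the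
sphere bound `Φ_σ(t) = ∫_{-∞}^{t} f_u(r) g_σ(r) dr + ∫_{t}^{∞} g_σ(r) dr`:
the optimal parameter of the sphere bound does not depend on the SNR. -/
theorem sphere_bound_optimal_radius_independent_of_SNR
    (n : ℕ) (hn : 1 ≤ n)
    (fu : ℝ → ℝ) (hfu_nonneg : ∀ r, 0 ≤ fu r) (hfu_mono : Monotone fu)
    (hfu_meas : Measurable fu)
    (r₁ : ℝ) (hr₁ : fu r₁ = 1) :
    ∀ σ : ℝ, 0 < σ → ∀ t : ℝ,
      ((∫ r in Set.Iic r₁, fu r * chiDensity n σ r) +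
          ∫ r in Set.Ioi r₁, chiDensity n σ r) ≤
        (∫ r in Set.Iic t, fu r * chiDensity n σ r) +
          ∫ r in Set.Ioi t, chiDensity n σ r := by
  intro σ hσ t
  set g := chiDensity n σ with hg
  have hgnn : ∀ r, 0 ≤ g r := chiDensity_nonneg n hσ
  have hgint : Integrable g := chiDensity_integrable n hσ
  have hmeas : Measurable fun r => fu r * g r := hfu_meas.mul (chiDensity_measurable n σ)
  have hint : ∀ s : ℝ, IntegrableOn (fun r => fu r * g r) (Set.Iic s) := by
    intro s
    refine Integrable.mono' ((hgint.integrableOn).const_mul (fu s))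
      hmeas.aestronglyMeasurable ?_
    refine (ae_restrict_iff' measurableSet_Iic).2 (Filter.Eventually.of_forall fun r hr => ?_)
    rw [Real.norm_eq_abs, abs_of_nonneg (mul_nonneg (hfu_nonneg r) (hgnn r))]
    exact mul_le_mul_of_nonneg_right (hfu_mono hr) (hgnn r)
  rcases le_total r₁ t with ht | ht
  · have h1 : (∫ r in Set.Iic r₁, fu r * g r) + ∫ r in Set.Ioc r₁ t, fu r * g r
        = ∫ r in Set.Iic t, fu r * g r := by
      rw [← setIntegral_union (Set.Iic_disjoint_Ioc le_rfl) measurableSet_Ioc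
        (hint r₁) ((hint t).mono_set Set.Ioc_subset_Iic_self),
        Set.Iic_union_Ioc_eq_Iic ht]
    have h2 : (∫ r in Set.Ioc r₁ t, g r) + ∫ r in Set.Ioi t, g r
        = ∫ r in Set.Ioi r₁, g r := by
      rw [← setIntegral_union (Set.Ioc_disjoint_Ioi le_rfl) measurableSet_Ioi
        hgint.integrableOn hgint.integrableOn, Set.Ioc_union_Ioi_eq_Ioi ht]
    have key : (∫ r in Set.Ioc r₁ t, g r) ≤ ∫ r in Set.Ioc r₁ t, fu r * g r := by
      refine setIntegral_mono_on hgint.integrableOn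
        ((hint t).mono_set Set.Ioc_subset_Iic_self) measurableSet_Ioc fun r hr => ?_
      have h1fu : 1 ≤ fu r := hr₁ ▸ hfu_mono hr.1.le
      exact le_mul_of_one_le_left (hgnn r) h1fu
    linarith
  · have h1 : (∫ r in Set.Iic t, fu r * g r) + ∫ r in Set.Ioc t r₁, fu r * g r
        = ∫ r in Set.Iic r₁, fu r * g r := by
      rw [← setIntegral_union (Set.Iic_disjoint_Ioc le_rfl) measurableSet_Ioc
        (hint t) ((hint r₁).mono_set Set.Ioc_subset_Iic_self),
        Set.Iic_union_Ioc_eq_Iic ht]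
    have h2 : (∫ r in Set.Ioc t r₁, g r) + ∫ r in Set.Ioi r₁, g r
        = ∫ r in Set.Ioi t, g r := by
      rw [← setIntegral_union (Set.Ioc_disjoint_Ioi le_rfl) measurableSet_Ioi
        hgint.integrableOn hgint.integrableOn, Set.Ioc_union_Ioi_eq_Ioi ht]
    have key : (∫ r in Set.Ioc t r₁, fu r * g r) ≤ ∫ r in Set.Ioc t r₁, g r := by
      refine setIntegral_mono_on ((hint r₁).mono_set Set.Ioc_subset_Iic_self)
        hgint.integrableOn measurableSet_Ioc fun r hr => ?_
      have h1fu : fu r ≤ 1 := hr₁ ▸ hfu_mono hr.2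
      exact mul_le_of_le_one_left (hgnn r) h1fu
    linarith
end

section
/- Let n ≥ 2, let s, ŝ ∈ ℝⁿ with δ = ‖s − ŝ‖ > 0, let r > 0, and let Y be distributed according to the normalized (uniform) surface measure on the sphere {y ∈ ℝⁿ : ‖y − s‖ = r}. If r > δ/2 then P(‖Y − ŝ‖ ≤ ‖Y − s‖) = (Γ(n/2)/(√π Γ((n−1)/2))) ∫_0^{arccos(δ/(2r))} sin^{n−2} φ dφ, and if r ≤ δ/2 then P(‖Y − ŝ‖ ≤ ‖Y − s‖) = 0. -/
open MeasureTheory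

/-- The normalized (uniform) surface measure on the sphere
`{y ∈ ℝⁿ : ‖y - c‖ = r}`: the pushforward of the normalized surface measure on
the unit sphere under `y ↦ c + r • y`. -/
noncomputable def sphereUniform (n : ℕ) (c : EuclideanSpace ℝ (Fin n)) (r : ℝ) :
    Measure (EuclideanSpace ℝ (Fin n)) :=
  ((volume : Measure (EuclideanSpace ℝ (Fin n))).toSphere Set.univ)⁻¹ •
    Measure.map
      (fun y : Metric.sphere (0 : EuclideanSpace ℝ (Fin n)) 1 =>
        c + r • (y : EuclideanSpace ℝ (Fin n)))
      (volume : Measure (EuclideanSpace ℝ (Fin n))).toSphere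


section SphereBoundAux
open MeasureTheory Set Real
open scoped Pointwise

local notation "⟪" x ", " y "⟫" => @inner ℝ _ _ x y


lemma subst_lemma (m : ℕ) {t : ℝ} (ht0 : 0 < t) (ht1 : t < 1) :
    ∫ a in t..1, (Real.sqrt (1 - a^2))^(m+1)
      = ∫ φ in (0:ℝ)..Real.arccos t, Real.sin φ ^ (m+2) := by
  have hα0 : 0 ≤ Real.arccos t := Real.arccos_nonneg t
  have hαπ : Real.arccos t ≤ π := Real.arccos_le_pi t
  have key : (∫ x in (0:ℝ)..Real.arccos t,
      (-Real.sin x) • ((fun a => (Real.sqrt (1 - a^2))^(m+1)) ∘ Real.cos) x)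
      = ∫ u in (Real.cos 0)..(Real.cos (Real.arccos t)),
        (Real.sqrt (1 - u^2))^(m+1) := by
    apply intervalIntegral.integral_comp_smul_deriv
    · intro x _; simpa using (Real.hasDerivAt_cos x)
    · exact (Real.continuous_sin.neg).continuousOn
    · continuity
  rw [Real.cos_zero, Real.cos_arccos (by linarith) (by linarith)] at key
  have lhs_eq : (∫ x in (0:ℝ)..Real.arccos t,
      (-Real.sin x) • ((fun a => (Real.sqrt (1 - a^2))^(m+1)) ∘ Real.cos) x)
      = -∫ x in (0:ℝ)..Real.arccos t, Real.sin x ^ (m+2) := by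
    rw [← intervalIntegral.integral_neg]
    apply intervalIntegral.integral_congr
    intro x hx
    rw [Set.uIcc_of_le hα0] at hx
    have hs : 0 ≤ Real.sin x := Real.sin_nonneg_of_nonneg_of_le_pi hx.1 (hx.2.trans hαπ)
    have : Real.sqrt (1 - Real.cos x ^ 2) = Real.sin x := by
      have h2 : 1 - Real.cos x ^ 2 = Real.sin x ^ 2 := by
        have := Real.sin_sq_add_cos_sq x; linarith
      rw [h2, Real.sqrt_sq hs]
    simp only [Function.comp, smul_eq_mul, this]
    ring
  rw [lhs_eq] at key
  have := key.symm
  rw [intervalIntegral.integral_symm t 1] at this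
  linarith [this]

lemma one_dim (k : ℕ) {t : ℝ} (ht0 : 0 < t) (ht1 : t < 1) :
    ∫ a in (0:ℝ)..1, (min (a * (Real.sqrt (1 - t^2)/t)) (Real.sqrt (1 - a^2)))^(k+1)
      = ((k:ℝ)+1)/((k:ℝ)+2) * ∫ φ in (0:ℝ)..Real.arccos t, Real.sin φ ^ k := by
  set c : ℝ := Real.sqrt (1 - t^2)/t with hc
  have hc0 : 0 ≤ c := div_nonneg (Real.sqrt_nonneg _) ht0.le
  have hgc : Continuous fun a : ℝ => (min (a * c) (Real.sqrt (1 - a^2)))^(k+1) := by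
    apply Continuous.pow
    exact (continuous_id.mul continuous_const).min
      ((continuous_const.sub (continuous_pow 2)).sqrt)
  have hsplit : (∫ a in (0:ℝ)..1, (min (a * c) (Real.sqrt (1 - a^2)))^(k+1))
      = (∫ a in (0:ℝ)..t, (min (a * c) (Real.sqrt (1 - a^2)))^(k+1))
        + ∫ a in t..1, (min (a * c) (Real.sqrt (1 - a^2)))^(k+1) := by
    rw [intervalIntegral.integral_add_adjacent_intervals] <;>
      exact hgc.intervalIntegrable _ _
  have hsq : Real.sqrt (1 - t^2) ^ 2 = 1 - t^2 :=
    Real.sq_sqrt (by nlinarith)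
  have h1 : (∫ a in (0:ℝ)..t, (min (a * c) (Real.sqrt (1 - a^2)))^(k+1))
      = c^(k+1) * (t^(k+2) / ((k:ℝ)+2)) := by
    rw [intervalIntegral.integral_congr (g := fun a => a^(k+1) * c^(k+1)) ?_]
    · rw [intervalIntegral.integral_mul_const, integral_pow]
      push_cast; ring
    · intro a ha
      rw [Set.uIcc_of_le ht0.le] at ha
      have ha0 : 0 ≤ a := ha.1
      have hat : a ≤ t := ha.2
      have hmin : min (a * c) (Real.sqrt (1 - a^2)) = a * c := by
        apply min_eq_left
        rw [Real.le_sqrt (by positivity)]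
        swap
        · nlinarith
        have : (a*c)^2 = a^2 * (1 - t^2) / t^2 := by
          rw [hc]; field_simp; ring_nf; rw [hsq]; ring
        rw [this, div_le_iff₀ (by positivity)]
        nlinarith
      simp only [hmin, mul_pow]
  have h2 : (∫ a in t..1, (min (a * c) (Real.sqrt (1 - a^2)))^(k+1))
      = ∫ a in t..1, (Real.sqrt (1 - a^2))^(k+1) := by
    apply intervalIntegral.integral_congr
    intro a ha
    rw [Set.uIcc_of_le ht1.le] at ha
    have hta : t ≤ a := ha.1
    have ha1 : a ≤ 1 := ha.2
    have hmin : min (a * c) (Real.sqrt (1 - a^2)) = Real.sqrt (1 - a^2) := by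
      apply min_eq_right
      have hac : a * c = Real.sqrt ((a*c)^2) := by
        rw [Real.sqrt_sq (mul_nonneg (by linarith) hc0)]
      rw [hac]
      apply Real.sqrt_le_sqrt
      have : (a*c)^2 = a^2 * (1 - t^2) / t^2 := by
        rw [hc]; field_simp; ring_nf; rw [hsq]; ring
      rw [this, le_div_iff₀ (by positivity)]
      nlinarith
    simp only [hmin]
  have hrec := integral_sin_pow (a := (0:ℝ)) (b := Real.arccos t) (n := k)
  have hsin : Real.sin (Real.arccos t) = Real.sqrt (1 - t^2) := Real.sin_arccos t
  have hcos : Real.cos (Real.arccos t) = t := Real.cos_arccos (by linarith) (by linarith)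
  rw [hsplit, h1, h2, subst_lemma k ht0 ht1, hrec, hsin, hcos, Real.sin_zero]
  have hck : c^(k+1) * t^(k+2) = Real.sqrt (1 - t^2) ^ (k+1) * t := by
    rw [hc, div_pow]
    field_simp
    ring
  have h0 : (0:ℝ)^(k+1) = 0 := zero_pow (Nat.succ_ne_zero k)
  rw [h0, zero_mul, zero_sub]
  have heq : c^(k+1) * (t^(k+2)/((k:ℝ)+2)) = Real.sqrt (1-t^2)^(k+1)*t/((k:ℝ)+2) := by
    rw [← hck]; ring
  rw [neg_div]
  linarith [heq]

-- ball/closedBall of pi sets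
lemma pi_lt_vol (m : ℕ) [NeZero m] {ρ : ℝ} (hρ : 0 < ρ) :
    (volume : Measure (Fin m → ℝ)) {y | ∑ j, y j ^ 2 < ρ^2}
      = ENNReal.ofReal (ρ^m * (Real.sqrt π ^ m / Real.Gamma (m / 2 + 1))) := by
  have hMP := EuclideanSpace.volume_preserving_symm_measurableEquiv_toLp (Fin m)
  have hpre : (MeasurableEquiv.toLp 2 (Fin m → ℝ)).symm ⁻¹' {y | ∑ j, y j ^ 2 < ρ^2}
      = Metric.ball (0 : EuclideanSpace ℝ (Fin m)) ρ := by
    ext z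
    simp only [Set.mem_preimage, Set.mem_setOf_eq, Metric.mem_ball, dist_zero_right]
    rw [EuclideanSpace.norm_eq]
    rw [show (∑ j, ‖z j‖ ^ 2) = ∑ j, z j ^2 by
      refine Finset.sum_congr rfl fun j _ => by rw [Real.norm_eq_abs, sq_abs]]
    rw [Real.sqrt_lt' hρ]
    exact Iff.rfl
  have hmeas : MeasurableSet {y : Fin m → ℝ | ∑ j, y j ^ 2 < ρ^2} := by
    apply measurableSet_lt
    · exact Finset.measurable_sum _ fun j _ => (measurable_pi_apply j).pow_const 2
    · exact measurable_const
  rw [← hMP.measure_preimage hmeas.nullMeasurableSet, hpre,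
    EuclideanSpace.volume_ball, Fintype.card_fin]
  rw [← ENNReal.ofReal_pow hρ.le, ← ENNReal.ofReal_mul (by positivity)]

lemma pi_le_vol (m : ℕ) [NeZero m] {ρ : ℝ} (hρ : 0 ≤ ρ) :
    (volume : Measure (Fin m → ℝ)) {y | ∑ j, y j ^ 2 ≤ ρ^2}
      = ENNReal.ofReal (ρ^m * (Real.sqrt π ^ m / Real.Gamma (m / 2 + 1))) := by
  have hMP := EuclideanSpace.volume_preserving_symm_measurableEquiv_toLp (Fin m)
  have hpre : (MeasurableEquiv.toLp 2 (Fin m → ℝ)).symm ⁻¹' {y | ∑ j, y j ^ 2 ≤ ρ^2}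
      = Metric.closedBall (0 : EuclideanSpace ℝ (Fin m)) ρ := by
    ext z
    simp only [Set.mem_preimage, Set.mem_setOf_eq, Metric.mem_closedBall, dist_zero_right]
    rw [EuclideanSpace.norm_eq]
    rw [show (∑ j, ‖z j‖ ^ 2) = ∑ j, z j ^2 by
      refine Finset.sum_congr rfl fun j _ => by rw [Real.norm_eq_abs, sq_abs]]
    constructor
    · intro h
      rw [show ρ = Real.sqrt (ρ^2) by rw [Real.sqrt_sq hρ]]
      exact Real.sqrt_le_sqrt h
    · intro h
      have := Real.sqrt_le_sqrt h -- not directly; do directly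
      calc ∑ j, z j ^2 = Real.sqrt (∑ j, z j ^2) ^ 2 := by
            rw [Real.sq_sqrt (Finset.sum_nonneg fun j _ => sq_nonneg _)]
        _ ≤ ρ ^ 2 := by
            apply pow_le_pow_left₀ (Real.sqrt_nonneg _) h
  have hmeas : MeasurableSet {y : Fin m → ℝ | ∑ j, y j ^ 2 ≤ ρ^2} := by
    apply measurableSet_le
    · exact Finset.measurable_sum _ fun j _ => (measurable_pi_apply j).pow_const 2
    · exact measurable_const
  rw [← hMP.measure_preimage hmeas.nullMeasurableSet, hpre,
    EuclideanSpace.volume_closedBall, Fintype.card_fin]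
  rw [← ENNReal.ofReal_pow hρ, ← ENNReal.ofReal_mul (by positivity)]

section
variable (k : ℕ)

lemma cone_vol_pi (k : ℕ) {t : ℝ} (ht0 : 0 < t) (ht1 : t < 1) :
    (volume : Measure (Fin (k+2) → ℝ))
      {x | 0 < ∑ i, x i ^2 ∧ (∑ i, x i ^2) < 1 ∧ 0 ≤ x 0 ∧ t^2 * ∑ i, x i ^2 ≤ (x 0)^2}
    = ENNReal.ofReal ((Real.sqrt π ^ (k+1) / Real.Gamma ((k+1 : ℕ) / 2 + 1)) *
        ∫ a in (0:ℝ)..1, (min (a * (Real.sqrt (1 - t^2)/t)) (Real.sqrt (1 - a^2)))^(k+1)) := by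
  set c : ℝ := Real.sqrt (1 - t^2)/t with hc
  set V : ℝ := Real.sqrt π ^ (k+1) / Real.Gamma ((k+1 : ℕ) / 2 + 1) with hV
  have hc0 : 0 ≤ c := div_nonneg (Real.sqrt_nonneg _) ht0.le
  have hV0 : 0 ≤ V := by
    rw [hV]
    have := Real.Gamma_pos_of_pos (show (0:ℝ) < (k+1 : ℕ) / 2 + 1 by positivity)
    positivity
  set Q : Set (ℝ × (Fin (k+1) → ℝ)) :=
    {p | 0 < p.1^2 + ∑ j, p.2 j ^2 ∧ p.1^2 + ∑ j, p.2 j ^2 < 1 ∧ 0 ≤ p.1 ∧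
      t^2 * (p.1^2 + ∑ j, p.2 j ^2) ≤ p.1^2} with hQdef
  have hsum_meas : Measurable fun p : ℝ × (Fin (k+1) → ℝ) => p.1^2 + ∑ j, p.2 j ^2 :=
    (measurable_fst.pow_const 2).add
      (Finset.measurable_sum _ fun j _ => ((measurable_pi_apply j).comp measurable_snd).pow_const 2)
  have hQ : MeasurableSet Q := by
    apply MeasurableSet.inter (measurableSet_lt measurable_const hsum_meas)
    apply MeasurableSet.inter (measurableSet_lt hsum_meas measurable_const)
    exact (measurableSet_le measurable_const (measurable_fst)).inter
      (measurableSet_le (hsum_meas.const_mul _) (measurable_fst.pow_const 2))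
  have hPQ : {x : Fin (k+2) → ℝ | 0 < ∑ i, x i ^2 ∧ (∑ i, x i ^2) < 1 ∧ 0 ≤ x 0 ∧
      t^2 * ∑ i, x i ^2 ≤ (x 0)^2}
      = (MeasurableEquiv.piFinSuccAbove (fun _ => ℝ) 0) ⁻¹' Q := by
    ext x
    have happ : (MeasurableEquiv.piFinSuccAbove (fun _ : Fin (k+2) => ℝ) 0) x
        = (x 0, fun j => x ((0 : Fin (k+2)).succAbove j)) := rfl
    simp only [Set.mem_preimage, happ, hQdef, Set.mem_setOf_eq]
    rw [show (∑ i, x i ^ 2) = x 0 ^2 + ∑ j : Fin (k+1), x ((0 : Fin (k+2)).succAbove j) ^ 2 by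
      rw [Fin.sum_univ_succ]
      simp [Fin.succAbove_zero]]
  rw [hPQ, (volume_preserving_piFinSuccAbove (fun _ : Fin (k+2) => ℝ) 0).measure_preimage
    hQ.nullMeasurableSet, Measure.volume_eq_prod, Measure.prod_apply hQ]
  have hslice : ∀ a : ℝ, (volume : Measure (Fin (k+1) → ℝ)) (Prod.mk a ⁻¹' Q)
      = Set.indicator (Set.Ioo (0:ℝ) 1)
          (fun a => ENNReal.ofReal (V * (min (a * c) (Real.sqrt (1 - a^2)))^(k+1))) a := by
    intro a
    have hsq : Real.sqrt (1 - t^2) ^ 2 = 1 - t^2 := Real.sq_sqrt (by nlinarith)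
    have hacsq : (a*c)^2 = a^2 * (1 - t^2) / t^2 := by
      rw [hc]; field_simp; ring_nf; rw [hsq]; ring
    by_cases ha : a ∈ Set.Ioo (0:ℝ) 1
    · obtain ⟨ha0, ha1⟩ := ha
      rw [Set.indicator_of_mem (by exact ⟨ha0, ha1⟩)]
      have hsetQ : Prod.mk a ⁻¹' Q
          = {y : Fin (k+1) → ℝ | ∑ j, y j ^2 < 1 - a^2} ∩ {y | ∑ j, y j ^2 ≤ (a*c)^2} := by
        ext y
        simp only [Set.mem_preimage, hQdef, Set.mem_setOf_eq, Set.mem_inter_iff]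
        have hy0 : 0 ≤ ∑ j, y j ^2 := Finset.sum_nonneg fun j _ => sq_nonneg _
        constructor
        · rintro ⟨-, h2, -, h4⟩
          refine ⟨by linarith, ?_⟩
          rw [hacsq, le_div_iff₀ (by positivity)]
          nlinarith
        · rintro ⟨h1, h2⟩
          rw [hacsq, le_div_iff₀ (by positivity)] at h2
          refine ⟨by positivity, by linarith, ha0.le, by nlinarith⟩
      rw [hsetQ]
      rcases le_or_gt t a with hta | hat
      · -- min is sqrt(1-a^2); intersection = ball part
        have hss : {y : Fin (k+1) → ℝ | ∑ j, y j ^2 < 1 - a^2} ∩ {y | ∑ j, y j ^2 ≤ (a*c)^2}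
            = {y | ∑ j, y j ^2 < 1 - a^2} := by
          apply Set.inter_eq_left.mpr
          intro y hy
          simp only [Set.mem_setOf_eq] at hy ⊢
          have : 1 - a^2 ≤ (a*c)^2 := by
            rw [hacsq, le_div_iff₀ (by positivity)]
            nlinarith
          linarith
        have hmin : min (a * c) (Real.sqrt (1 - a^2)) = Real.sqrt (1 - a^2) := by
          apply min_eq_right
          rw [Real.sqrt_le_iff]
          refine ⟨by positivity, ?_⟩
          rw [hacsq, le_div_iff₀ (by positivity)]
          nlinarith
        have hρ : (0:ℝ) < Real.sqrt (1 - a^2) := Real.sqrt_pos.mpr (by nlinarith)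
        have hset2 : {y : Fin (k+1) → ℝ | ∑ j, y j ^2 < 1 - a^2}
            = {y | ∑ j, y j ^2 < (Real.sqrt (1-a^2))^2} := by
          rw [Real.sq_sqrt (by nlinarith : (0:ℝ) ≤ 1 - a^2)]
        rw [hss, hset2, pi_lt_vol (k+1) hρ, hmin, hV]
        push_cast
        rw [mul_comm]
      · -- a < t : min is a*c; intersection = closedBall part
        have hss : {y : Fin (k+1) → ℝ | ∑ j, y j ^2 < 1 - a^2} ∩ {y | ∑ j, y j ^2 ≤ (a*c)^2}
            = {y | ∑ j, y j ^2 ≤ (a*c)^2} := by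
          apply Set.inter_eq_right.mpr
          intro y hy
          simp only [Set.mem_setOf_eq] at hy ⊢
          have : (a*c)^2 < 1 - a^2 := by
            rw [hacsq, div_lt_iff₀ (by positivity)]
            nlinarith
          linarith
        have hmin : min (a * c) (Real.sqrt (1 - a^2)) = a * c := by
          apply min_eq_left
          rw [Real.le_sqrt (by positivity) (by nlinarith)]
          rw [hacsq, div_le_iff₀ (by positivity)]
          nlinarith
        rw [hss, pi_le_vol (k+1) (by positivity), hmin, hV]
        push_cast
        rw [mul_comm]
    · rw [Set.indicator_of_notMem ha]
      have : Prod.mk a ⁻¹' Q = ∅ := by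
        ext y
        simp only [Set.mem_preimage, hQdef, Set.mem_setOf_eq, Set.mem_empty_iff_false,
          iff_false, not_and]
        intro h1 h2 h3
        have hy0 : 0 ≤ ∑ j, y j ^2 := Finset.sum_nonneg fun j _ => sq_nonneg _
        rw [Set.mem_Ioo, not_and_or] at ha
        push_neg at ha
        rcases ha with ha | ha
        · have ha0 : a = 0 := le_antisymm ha h3
          subst ha0
          intro h4
          simp only [ne_eq, OfNat.ofNat_ne_zero, not_false_eq_true, zero_pow, zero_add] at h1 h4
          have ht2 : 0 < t^2 := by positivity
          nlinarith
        · intro _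
          nlinarith
      rw [this, measure_empty]
  rw [lintegral_congr hslice, lintegral_indicator measurableSet_Ioo]
  have hcont : Continuous fun a : ℝ => V * (min (a * c) (Real.sqrt (1 - a^2)))^(k+1) :=
    continuous_const.mul (((continuous_id.mul continuous_const).min
      ((continuous_const.sub (continuous_pow 2)).sqrt)).pow (k+1))
  rw [← ofReal_integral_eq_lintegral_ofReal
      (hcont.integrableOn_Icc.mono_set Set.Ioo_subset_Icc_self) ?_]
  · rw [← MeasureTheory.integral_Ioc_eq_integral_Ioo,
      ← intervalIntegral.integral_of_le (by norm_num : (0:ℝ) ≤ 1),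
      intervalIntegral.integral_const_mul]
  · apply (ae_restrict_iff' measurableSet_Ioo).mpr
    filter_upwards with a ha
    have h0 : 0 ≤ min (a * c) (Real.sqrt (1 - a^2)) :=
      le_min (mul_nonneg ha.1.le hc0) (Real.sqrt_nonneg _)
    exact mul_nonneg hV0 (pow_nonneg h0 _)

end

lemma cap_toSphere (k : ℕ) (e : EuclideanSpace ℝ (Fin (k+2))) (he : ‖e‖ = 1)
    {t : ℝ} (ht0 : 0 < t) (ht1 : t < 1) :
    (volume : Measure (EuclideanSpace ℝ (Fin (k+2)))).toSphere
        {u : Metric.sphere (0 : EuclideanSpace ℝ (Fin (k+2))) 1 |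
          t ≤ ⟪e, (u : EuclideanSpace ℝ (Fin (k+2)))⟫}
      = ((k+2 : ℕ) : ENNReal) * ENNReal.ofReal ((Real.sqrt π ^ (k+1) / Real.Gamma ((k+1 : ℕ) / 2 + 1)) *
          ∫ a in (0:ℝ)..1, (min (a * (Real.sqrt (1 - t^2)/t)) (Real.sqrt (1 - a^2)))^(k+1)) := by
  have hcont : Continuous fun u : Metric.sphere (0 : EuclideanSpace ℝ (Fin (k+2))) 1 =>
      ⟪e, (u : EuclideanSpace ℝ (Fin (k+2)))⟫ :=
    Continuous.inner continuous_const continuous_subtype_val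
  have hA : MeasurableSet {u : Metric.sphere (0 : EuclideanSpace ℝ (Fin (k+2))) 1 |
      t ≤ ⟪e, (u : EuclideanSpace ℝ (Fin (k+2)))⟫} :=
    measurableSet_le measurable_const hcont.measurable
  rw [Measure.toSphere_apply' _ hA]
  -- cone set equality
  have hcone : (Set.Ioo (0:ℝ) 1) • ((Subtype.val) ''
        {u : Metric.sphere (0 : EuclideanSpace ℝ (Fin (k+2))) 1 |
          t ≤ ⟪e, (u : EuclideanSpace ℝ (Fin (k+2)))⟫})
      = {x : EuclideanSpace ℝ (Fin (k+2)) | 0 < ‖x‖ ∧ ‖x‖ < 1 ∧ t * ‖x‖ ≤ ⟪e, x⟫} := by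
    ext x
    constructor
    · rintro ⟨a, ha, y, ⟨u, hu, rfl⟩, rfl⟩
      have hnu : ‖(u : EuclideanSpace ℝ (Fin (k+2)))‖ = 1 := by
        simpa using mem_sphere_zero_iff_norm.mp u.2
      have hna : ‖a • (u : EuclideanSpace ℝ (Fin (k+2)))‖ = a := by
        rw [norm_smul, hnu, mul_one, Real.norm_eq_abs, abs_of_pos ha.1]
      refine ⟨by rw [hna]; exact ha.1, by rw [hna]; exact ha.2, ?_⟩
      rw [hna, real_inner_smul_right]
      have := hu
      simp only [Set.mem_setOf_eq] at this
      nlinarith [ha.1]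
    · rintro ⟨h0, h1, hip⟩
      have hx0 : x ≠ 0 := by
        intro h; rw [h, norm_zero] at h0; exact lt_irrefl _ h0
      refine ⟨‖x‖, ⟨h0, h1⟩, ‖x‖⁻¹ • x, ?_, ?_⟩
      · refine ⟨⟨‖x‖⁻¹ • x, ?_⟩, ?_, rfl⟩
        · rw [mem_sphere_zero_iff_norm]
          rw [norm_smul, Real.norm_eq_abs, abs_of_pos (by positivity), inv_mul_cancel₀ h0.ne']
        · simp only [Set.mem_setOf_eq]
          rw [real_inner_smul_right, le_inv_mul_iff₀ h0, mul_comm]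
          exact hip
      · show ‖x‖ • (‖x‖⁻¹ • x) = x
        rw [smul_smul, mul_inv_cancel₀ h0.ne', one_smul]
  rw [hcone]
  -- orthonormal basis with b 0 = e
  have hortho : Orthonormal ℝ (({0} : Set (Fin (k+2))).restrict (fun _ => e)) := by
    constructor
    · intro i; exact he
    · intro i j hij
      exact absurd (Subtype.ext (by
        have hi := i.2; have hj := j.2
        simp only [Set.mem_singleton_iff] at hi hj
        rw [hi, hj])) hij
  obtain ⟨b, hb⟩ := Orthonormal.exists_orthonormalBasis_extension_of_card_eq
    (𝕜 := ℝ) (by simp [finrank_euclideanSpace_fin]) hortho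
  have hb0 : b 0 = e := hb 0 rfl
  -- rotate
  have hCpre : {x : EuclideanSpace ℝ (Fin (k+2)) | 0 < ‖x‖ ∧ ‖x‖ < 1 ∧ t * ‖x‖ ≤ ⟪e, x⟫}
      = b.repr ⁻¹' {z : EuclideanSpace ℝ (Fin (k+2)) |
          0 < ∑ i, z i ^2 ∧ (∑ i, z i ^2) < 1 ∧ 0 ≤ z 0 ∧ t^2 * ∑ i, z i ^2 ≤ (z 0)^2} := by
    ext x
    have hnorm : ∑ i, (b.repr x) i ^2 = ‖x‖^2 := by
      have h1 : ‖b.repr x‖ = ‖x‖ := b.repr.norm_map x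
      rw [← h1, EuclideanSpace.norm_eq]
      rw [Real.sq_sqrt (Finset.sum_nonneg fun i _ => sq_nonneg _)]
      exact Finset.sum_congr rfl fun i _ => by rw [Real.norm_eq_abs, sq_abs]
    have hip : (b.repr x) 0 = ⟪e, x⟫ := by
      rw [b.repr_apply_apply, hb0]
    simp only [Set.mem_preimage, Set.mem_setOf_eq, hnorm, hip]
    have hnx : 0 ≤ ‖x‖ := norm_nonneg x
    constructor
    · rintro ⟨h0, h1, h2⟩
      have hipn : 0 ≤ ⟪e, x⟫ := le_trans (by positivity) h2
      have h4 : 0 ≤ t * ‖x‖ := by positivity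
      refine ⟨by positivity, by nlinarith, hipn,
        by nlinarith [mul_le_mul h2 h2 h4 hipn]⟩
    · rintro ⟨h0, h1, h2, h3⟩
      have hn0 : 0 < ‖x‖ := by
        rcases lt_or_eq_of_le hnx with h | h
        · exact h
        · exfalso; rw [← h] at h0; simp at h0
      refine ⟨hn0, by nlinarith, ?_⟩
      nlinarith [mul_pos ht0 hn0]
  have hsum_meas : Measurable fun x : Fin (k+2) → ℝ => ∑ i, x i ^2 :=
    Finset.measurable_sum _ fun i _ => (measurable_pi_apply i).pow_const 2
  have hmeas_pi : MeasurableSet {x : Fin (k+2) → ℝ |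
      0 < ∑ i, x i ^2 ∧ (∑ i, x i ^2) < 1 ∧ 0 ≤ x 0 ∧ t^2 * ∑ i, x i ^2 ≤ (x 0)^2} :=
    (measurableSet_lt measurable_const hsum_meas).inter
      ((measurableSet_lt hsum_meas measurable_const).inter
        ((measurableSet_le measurable_const (measurable_pi_apply 0)).inter
          (measurableSet_le (hsum_meas.const_mul _) ((measurable_pi_apply 0).pow_const 2))))
  have hmeas_E : MeasurableSet {z : EuclideanSpace ℝ (Fin (k+2)) |
      0 < ∑ i, z i ^2 ∧ (∑ i, z i ^2) < 1 ∧ 0 ≤ z 0 ∧ t^2 * ∑ i, z i ^2 ≤ (z 0)^2} :=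
    hmeas_pi.preimage (MeasurableEquiv.toLp 2 (Fin (k+2) → ℝ)).symm.measurable
  rw [hCpre, b.measurePreserving_repr.measure_preimage hmeas_E.nullMeasurableSet]
  have hpi : (volume : Measure (EuclideanSpace ℝ (Fin (k+2))))
        {z : EuclideanSpace ℝ (Fin (k+2)) |
          0 < ∑ i, z i ^2 ∧ (∑ i, z i ^2) < 1 ∧ 0 ≤ z 0 ∧ t^2 * ∑ i, z i ^2 ≤ (z 0)^2}
        = (volume : Measure (Fin (k+2) → ℝ))
        {x | 0 < ∑ i, x i ^2 ∧ (∑ i, x i ^2) < 1 ∧ 0 ≤ x 0 ∧ t^2 * ∑ i, x i ^2 ≤ (x 0)^2} := by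
      rw [← (EuclideanSpace.volume_preserving_symm_measurableEquiv_toLp
        (Fin (k+2))).measure_preimage hmeas_pi.nullMeasurableSet]
      rfl
  rw [hpi, cone_vol_pi k ht0 ht1]
  have hfr : (Module.finrank ℝ (EuclideanSpace ℝ (Fin (k+2)))) = k+2 := finrank_euclideanSpace_fin
  rw [hfr]
  try simp

lemma sphere_univ_vol (k : ℕ) :
    (volume : Measure (EuclideanSpace ℝ (Fin (k+2)))).toSphere Set.univ
      = ((k+2 : ℕ) : ENNReal) * ENNReal.ofReal (Real.sqrt π ^ (k+2) / Real.Gamma ((k+2 : ℕ) / 2 + 1)) := by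
  rw [Measure.toSphere_apply_univ, EuclideanSpace.volume_ball, Fintype.card_fin]
  have hfr : (Module.finrank ℝ (EuclideanSpace ℝ (Fin (k+2)))) = k+2 := finrank_euclideanSpace_fin
  rw [hfr]
  try simp

lemma cap_null (k : ℕ) (e : EuclideanSpace ℝ (Fin (k+2))) (he : ‖e‖ = 1)
    {t : ℝ} (ht : 1 ≤ t) :
    (volume : Measure (EuclideanSpace ℝ (Fin (k+2)))).toSphere
        {u : Metric.sphere (0 : EuclideanSpace ℝ (Fin (k+2))) 1 |
          t ≤ ⟪e, (u : EuclideanSpace ℝ (Fin (k+2)))⟫} = 0 := by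
  have he0 : e ≠ 0 := by intro h; rw [h, norm_zero] at he; norm_num at he
  have hes : e ∈ Metric.sphere (0 : EuclideanSpace ℝ (Fin (k+2))) 1 := by
    rw [mem_sphere_zero_iff_norm]; exact he
  apply measure_mono_null
    (t := {(⟨e, hes⟩ : Metric.sphere (0 : EuclideanSpace ℝ (Fin (k+2))) 1)})
  · intro u hu
    simp only [Set.mem_setOf_eq] at hu
    have hnu : ‖(u : EuclideanSpace ℝ (Fin (k+2)))‖ = 1 := by
      simpa using mem_sphere_zero_iff_norm.mp u.2
    have hle : ⟪e, (u : EuclideanSpace ℝ (Fin (k+2)))⟫ ≤ 1 := by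
      have := real_inner_le_norm e (u : EuclideanSpace ℝ (Fin (k+2)))
      rw [he, hnu] at this; simpa using this
    have heq : ⟪e, (u : EuclideanSpace ℝ (Fin (k+2)))⟫ = 1 := le_antisymm hle (le_trans ht hu)
    have := (inner_eq_one_iff_of_norm_eq_one he hnu).mp heq
    simp only [Set.mem_singleton_iff]
    exact Subtype.ext this.symm
  · -- singleton has toSphere measure zero
    rw [Measure.toSphere_apply' _ (measurableSet_singleton _)]
    have himg : (Subtype.val ''
        ({(⟨e, hes⟩ : Metric.sphere (0 : EuclideanSpace ℝ (Fin (k+2))) 1)} :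
          Set (Metric.sphere (0 : EuclideanSpace ℝ (Fin (k+2))) 1))) = {e} := by
      simp
    rw [himg]
    have hsub : (Set.Ioo (0:ℝ) 1) • ({e} : Set (EuclideanSpace ℝ (Fin (k+2))))
        ⊆ (Submodule.span ℝ {e} : Submodule ℝ (EuclideanSpace ℝ (Fin (k+2)))) := by
      rintro x ⟨a, _, y, hy, rfl⟩
      rw [Set.mem_singleton_iff] at hy
      subst hy
      exact Submodule.smul_mem _ _ (Submodule.subset_span rfl)
    have hspan : (Submodule.span ℝ ({e} : Set (EuclideanSpace ℝ (Fin (k+2))))) ≠ ⊤ := by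
      intro h
      have h1 : Module.finrank ℝ (Submodule.span ℝ ({e} : Set (EuclideanSpace ℝ (Fin (k+2))))) = 1 :=
        finrank_span_singleton he0
      rw [h] at h1
      rw [finrank_top] at h1
      rw [finrank_euclideanSpace_fin] at h1
      omega
    rw [measure_mono_null hsub (Measure.addHaar_submodule _ _ hspan)]
    simp


set_option maxHeartbeats 2000000 in
/-- **Conditional pair-wise error probability of the sphere bound.** If `Y` is
uniformly distributed on the sphere of radius `r` centered at `s`, and `s'` is
a competitor at Euclidean distance `δ = ‖s - s'‖ > 0`, then
`P(‖Y - s'‖ ≤ ‖Y - s‖)` equals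
`(Γ(n/2)/(√π Γ((n-1)/2))) ∫_0^{arccos(δ/(2r))} sin^{n-2} φ dφ` when
`r > δ/2`, and equals `0` when `r ≤ δ/2`. -/
theorem sphere_bound_conditional_pairwise
    (n : ℕ) (hn : 2 ≤ n) (s s' : EuclideanSpace ℝ (Fin n)) (hne : s ≠ s')
    (r : ℝ) (hr : 0 < r) :
    (‖s - s'‖ / 2 < r →
      ((sphereUniform n s r) {y | ‖y - s'‖ ≤ ‖y - s‖}).toReal =
        (Real.Gamma ((n : ℝ) / 2) /
            (Real.sqrt Real.pi * Real.Gamma (((n : ℝ) - 1) / 2))) *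
          ∫ φ in (0 : ℝ)..Real.arccos (‖s - s'‖ / (2 * r)), Real.sin φ ^ (n - 2)) ∧
    (r ≤ ‖s - s'‖ / 2 →
      ((sphereUniform n s r) {y | ‖y - s'‖ ≤ ‖y - s‖}).toReal = 0) := by

  obtain ⟨k, rfl⟩ : ∃ k, n = k + 2 := ⟨n - 2, by omega⟩
  have hδ : 0 < ‖s - s'‖ := by
    rw [norm_pos_iff]; exact sub_ne_zero.mpr hne
  set δ : ℝ := ‖s - s'‖ with hδdef
  set t : ℝ := δ / (2 * r) with htdef
  have ht0 : 0 < t := div_pos hδ (by positivity)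
  set e : EuclideanSpace ℝ (Fin (k+2)) := δ⁻¹ • (s' - s) with hedef
  have he : ‖e‖ = 1 := by
    rw [hedef, norm_smul, Real.norm_eq_abs, abs_of_pos (by positivity), norm_sub_rev]
    exact inv_mul_cancel₀ hδ.ne'
  -- the set is measurable
  have hS : MeasurableSet {y : EuclideanSpace ℝ (Fin (k+2)) | ‖y - s'‖ ≤ ‖y - s‖} := by
    apply measurableSet_le <;> fun_prop
  have hF : Measurable fun u : Metric.sphere (0 : EuclideanSpace ℝ (Fin (k+2))) 1 =>
      s + r • (u : EuclideanSpace ℝ (Fin (k+2))) := by fun_prop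
  -- preimage is the cap
  have hpre : (fun u : Metric.sphere (0 : EuclideanSpace ℝ (Fin (k+2))) 1 =>
        s + r • (u : EuclideanSpace ℝ (Fin (k+2)))) ⁻¹'
        {y : EuclideanSpace ℝ (Fin (k+2)) | ‖y - s'‖ ≤ ‖y - s‖}
      = {u : Metric.sphere (0 : EuclideanSpace ℝ (Fin (k+2))) 1 |
          t ≤ ⟪e, (u : EuclideanSpace ℝ (Fin (k+2)))⟫} := by
    ext u
    have hnu : ‖(u : EuclideanSpace ℝ (Fin (k+2)))‖ = 1 := by
      simpa using mem_sphere_zero_iff_norm.mp u.2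
    simp only [Set.mem_preimage, Set.mem_setOf_eq]
    have h1 : s + r • (u : EuclideanSpace ℝ (Fin (k+2))) - s
        = r • (u : EuclideanSpace ℝ (Fin (k+2))) := by abel
    have h2 : s + r • (u : EuclideanSpace ℝ (Fin (k+2))) - s'
        = (s - s') + r • (u : EuclideanSpace ℝ (Fin (k+2))) := by abel
    rw [h1, h2]
    have hnr : ‖r • (u : EuclideanSpace ℝ (Fin (k+2)))‖ = r := by
      rw [norm_smul, hnu, Real.norm_eq_abs, abs_of_pos hr, mul_one]
    rw [hnr]
    have hip : ⟪e, (u : EuclideanSpace ℝ (Fin (k+2)))⟫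
        = - δ⁻¹ * ⟪s - s', (u : EuclideanSpace ℝ (Fin (k+2)))⟫ := by
      rw [hedef, real_inner_smul_left]
      rw [show s' - s = -(s - s') by abel, inner_neg_left]
      ring
    set w : ℝ := ⟪s - s', (u : EuclideanSpace ℝ (Fin (k+2)))⟫ with hwdef
    have hsq := norm_add_sq_real (s - s') (r • (u : EuclideanSpace ℝ (Fin (k+2))))
    rw [real_inner_smul_right, ← hwdef, ← hδdef] at hsq
    have hnn : (0:ℝ) ≤ ‖(s - s') + r • (u : EuclideanSpace ℝ (Fin (k+2)))‖ := norm_nonneg _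
    constructor
    · intro h
      have hsq2 : ‖(s - s') + r • (u : EuclideanSpace ℝ (Fin (k+2)))‖^2 ≤ r^2 := by nlinarith
      have hkey : δ^2 + 2*r*w ≤ 0 := by nlinarith
      rw [hip, htdef, div_le_iff₀ (by positivity),
        show -δ⁻¹ * w * (2*r) = δ⁻¹ * (-(2*r*w)) by ring, le_inv_mul_iff₀ hδ]
      nlinarith
    · intro h
      rw [hip, htdef, div_le_iff₀ (by positivity),
        show -δ⁻¹ * w * (2*r) = δ⁻¹ * (-(2*r*w)) by ring, le_inv_mul_iff₀ hδ] at h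
      have hsq2 : ‖(s - s') + r • (u : EuclideanSpace ℝ (Fin (k+2)))‖^2 ≤ r^2 := by nlinarith
      nlinarith
  have hmain : (sphereUniform (k+2) s r) {y | ‖y - s'‖ ≤ ‖y - s‖}
      = ((volume : Measure (EuclideanSpace ℝ (Fin (k+2)))).toSphere Set.univ)⁻¹ *
        (volume : Measure (EuclideanSpace ℝ (Fin (k+2)))).toSphere
          {u : Metric.sphere (0 : EuclideanSpace ℝ (Fin (k+2))) 1 |
            t ≤ ⟪e, (u : EuclideanSpace ℝ (Fin (k+2)))⟫} := by
    rw [sphereUniform, Measure.smul_apply, Measure.map_apply hF hS, hpre, smul_eq_mul]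
  constructor
  · intro hcase
    have ht1 : t < 1 := by
      rw [htdef, div_lt_one (by positivity)]
      linarith
    rw [hmain, cap_toSphere k e he ht0 ht1, sphere_univ_vol k, one_dim k ht0 ht1]
    -- now pure ENNReal/real arithmetic
    have hG1 : 0 < Real.Gamma ((k+1 : ℕ) / 2 + 1) :=
      Real.Gamma_pos_of_pos (by positivity)
    have hG2 : 0 < Real.Gamma ((k+2 : ℕ) / 2 + 1) :=
      Real.Gamma_pos_of_pos (by positivity)
    have hIsin : 0 ≤ ∫ φ in (0:ℝ)..Real.arccos t, Real.sin φ ^ k := by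
      apply intervalIntegral.integral_nonneg (Real.arccos_nonneg t)
      intro x hx
      exact pow_nonneg (Real.sin_nonneg_of_nonneg_of_le_pi hx.1
        (hx.2.trans (Real.arccos_le_pi t))) k
    have hπ : (0:ℝ) < Real.sqrt π := Real.sqrt_pos.mpr Real.pi_pos
    rw [ENNReal.toReal_mul, ENNReal.toReal_inv, ENNReal.toReal_mul, ENNReal.toReal_mul]
    rw [ENNReal.toReal_ofReal (by positivity), ENNReal.toReal_ofReal (by positivity)]
    simp only [ENNReal.toReal_natCast]
    -- final real computation
    have hshift1 : Real.Gamma ((k+1 : ℕ) / 2 + 1) = ((k+1 : ℕ) / 2) * Real.Gamma ((k+1 : ℕ)/2) :=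
      Real.Gamma_add_one (by positivity)
    have hshift2 : Real.Gamma ((k+2 : ℕ) / 2 + 1) = ((k+2 : ℕ) / 2) * Real.Gamma ((k+2 : ℕ)/2) :=
      Real.Gamma_add_one (by positivity)
    have hG1' : 0 < Real.Gamma ((k+1 : ℕ)/2) := Real.Gamma_pos_of_pos (by positivity)
    have hG2' : 0 < Real.Gamma ((k+2 : ℕ)/2) := Real.Gamma_pos_of_pos (by positivity)
    have hexp : (k + 2 - 2) = k := by omega
    rw [hexp]
    push_cast at hshift1 hshift2 hG1' hG2' ⊢
    rw [hshift1, hshift2, show (((k:ℝ) + 2) - 1)/2 = ((k:ℝ)+1)/2 by ring]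
    have hA : Real.Gamma (((k:ℝ)+1)/2) ≠ 0 := ne_of_gt hG1'
    have hB : Real.Gamma (((k:ℝ)+2)/2) ≠ 0 := ne_of_gt hG2'
    have hC : Real.sqrt π ≠ 0 := ne_of_gt hπ
    have hD : ((k:ℝ)+1) ≠ 0 := by positivity
    have hE : ((k:ℝ)+2) ≠ 0 := by positivity
    field_simp
    ring
  · intro hcase
    have ht1 : 1 ≤ t := by
      rw [htdef, le_div_iff₀ (by positivity)]
      linarith
    rw [hmain, cap_null k e he ht1, mul_zero]
    simp

end SphereBoundAux
end

section
/- Let n ≥ 2, r > 0, c ∈ ℝⁿ, and let Y be distributed according to the normalized (uniform) surface measure on the sphere {y ∈ ℝⁿ : ‖y − c‖ = r}. If s, ŝ ∈ ℝⁿ satisfy s ≠ ŝ and ‖c − ŝ‖ ≤ ‖c − s‖ (the center of the sphere is at least as close to the competitor ŝ as to s), then P(‖Y − ŝ‖ ≤ ‖Y − s‖) ≥ 1/2. -/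
open MeasureTheory

open Metric Set
open scoped Pointwise RealInnerProductSpace ENNReal

section aux

variable {n : ℕ}

lemma volume_neg_set (A : Set (EuclideanSpace ℝ (Fin n))) :
    (volume : Measure (EuclideanSpace ℝ (Fin n))) (-A) = volume A := by
  have h : -A = (-1 : ℝ) • A := by
    rw [← Set.image_smul]
    simp only [neg_one_smul]
    exact (Set.image_neg_eq_neg).symm
  rw [h, Measure.addHaar_smul]
  simp

-- key halfspace characterization
lemma halfspace_iff (s s' y : EuclideanSpace ℝ (Fin n)) :
    ‖y - s'‖ ≤ ‖y - s‖ ↔ 2 * ⟪y, s - s'⟫ ≤ ‖s‖ ^ 2 - ‖s'‖ ^ 2 := by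
  have h1 := @norm_sub_sq_real (EuclideanSpace ℝ (Fin n)) _ _ y s'
  have h2 := @norm_sub_sq_real (EuclideanSpace ℝ (Fin n)) _ _ y s
  rw [← pow_le_pow_iff_left₀ (norm_nonneg _) (norm_nonneg _) two_ne_zero]
  rw [inner_sub_right]
  constructor <;> intro h <;> nlinarith

lemma toSphere_neg_half (v : EuclideanSpace ℝ (Fin n)) :
    (volume : Measure (EuclideanSpace ℝ (Fin n))).toSphere
        {u : Metric.sphere (0 : EuclideanSpace ℝ (Fin n)) 1 | ⟪(u : EuclideanSpace ℝ (Fin n)), v⟫ ≤ 0}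
      = (volume : Measure (EuclideanSpace ℝ (Fin n))).toSphere
        {u : Metric.sphere (0 : EuclideanSpace ℝ (Fin n)) 1 | 0 ≤ ⟪(u : EuclideanSpace ℝ (Fin n)), v⟫} := by
  set A := {u : Metric.sphere (0 : EuclideanSpace ℝ (Fin n)) 1 | ⟪(u : EuclideanSpace ℝ (Fin n)), v⟫ ≤ 0}
  set B := {u : Metric.sphere (0 : EuclideanSpace ℝ (Fin n)) 1 | 0 ≤ ⟪(u : EuclideanSpace ℝ (Fin n)), v⟫}
  have hA : MeasurableSet A :=
    measurableSet_le ((continuous_inner.comp (by fun_prop : Continuous fun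
      u : Metric.sphere (0 : EuclideanSpace ℝ (Fin n)) 1 => ((u : EuclideanSpace ℝ (Fin n)), v))).measurable) measurable_const
  have hB : MeasurableSet B :=
    measurableSet_le measurable_const ((continuous_inner.comp (by fun_prop : Continuous fun
      u : Metric.sphere (0 : EuclideanSpace ℝ (Fin n)) 1 => ((u : EuclideanSpace ℝ (Fin n)), v))).measurable)
  rw [Measure.toSphere_apply' _ hA, Measure.toSphere_apply' _ hB]
  have himg : (Subtype.val '' B : Set (EuclideanSpace ℝ (Fin n))) = -(Subtype.val '' A) := by
    ext x
    simp only [Set.mem_neg, Set.mem_image, A, B, Set.mem_setOf_eq]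
    constructor
    · rintro ⟨u, hu, rfl⟩
      refine ⟨⟨-(u : EuclideanSpace ℝ (Fin n)), by simpa using u.2⟩, ?_, by simp⟩
      simpa [inner_neg_left] using hu
    · rintro ⟨u, hu, hux⟩
      refine ⟨⟨-(u : EuclideanSpace ℝ (Fin n)), by simpa using u.2⟩, ?_, ?_⟩
      · simpa [inner_neg_left] using hu
      · show -(u : EuclideanSpace ℝ (Fin n)) = x
        rw [hux]; simp
  rw [himg, Set.smul_neg, volume_neg_set]

end aux

/-- If `Y` is uniformly distributed on the sphere of radius `r > 0` centered at
`c` in `ℝⁿ`, and the center `c` is at least as close to the competitor `s'` as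
to `s` (with `s ≠ s'`), then the conditional pair-wise error probability
satisfies `P(‖Y - s'‖ ≤ ‖Y - s‖) ≥ 1/2`. -/
theorem sphere_center_on_competitor_side_half
    (n : ℕ) (hn : 2 ≤ n) (r : ℝ) (hr : 0 < r)
    (c s s' : EuclideanSpace ℝ (Fin n)) (hne : s ≠ s')
    (hc : ‖c - s'‖ ≤ ‖c - s‖) :
    (1 : ℝ) / 2 ≤ ((sphereUniform n c r) {y | ‖y - s'‖ ≤ ‖y - s‖}).toReal := by

  set μ := (volume : Measure (EuclideanSpace ℝ (Fin n))).toSphere with hμdef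
  set v : EuclideanSpace ℝ (Fin n) := s - s' with hv
  set S : Set (EuclideanSpace ℝ (Fin n)) := {y | ‖y - s'‖ ≤ ‖y - s‖} with hS
  set A : Set (Metric.sphere (0 : EuclideanSpace ℝ (Fin n)) 1) := {u | ⟪(u : EuclideanSpace ℝ (Fin n)), v⟫ ≤ 0} with hA
  set B : Set (Metric.sphere (0 : EuclideanSpace ℝ (Fin n)) 1) := {u | 0 ≤ ⟪(u : EuclideanSpace ℝ (Fin n)), v⟫} with hB
  have hSmeas : MeasurableSet S := by
    apply measurableSet_le <;> fun_prop
  have hf : Measurable (fun y : Metric.sphere (0 : EuclideanSpace ℝ (Fin n)) 1 => c + r • (y : EuclideanSpace ℝ (Fin n))) := by fun_prop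
  have h_ne_top : μ Set.univ ≠ ⊤ := measure_ne_top _ _
  have h_ne_zero : μ Set.univ ≠ 0 := by
    rw [hμdef, Measure.toSphere_apply_univ]
    refine mul_ne_zero ?_ (measure_ball_pos _ _ one_pos).ne'
    rw [finrank_euclideanSpace_fin]
    exact Nat.cast_ne_zero.mpr (by omega)
  -- A is a subset of the event's preimage
  have hsub : A ⊆ (fun y : Metric.sphere (0 : EuclideanSpace ℝ (Fin n)) 1 => c + r • (y : EuclideanSpace ℝ (Fin n))) ⁻¹' S := by
    intro u hu
    have hcv : 2 * ⟪c, v⟫ ≤ ‖s‖ ^ 2 - ‖s'‖ ^ 2 := (halfspace_iff s s' c).mp hc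
    have hinner : ⟪c + r • (u : EuclideanSpace ℝ (Fin n)), v⟫ = ⟪c, v⟫ + r * ⟪(u : EuclideanSpace ℝ (Fin n)), v⟫ := by
      simp [inner_add_left, real_inner_smul_left, Finset.mul_sum, mul_assoc]
    have hu' : ⟪(u : EuclideanSpace ℝ (Fin n)), v⟫ ≤ 0 := hu
    simp only [Set.mem_preimage, hS, Set.mem_setOf_eq]
    rw [halfspace_iff]
    rw [← hv] at *
    nlinarith
  -- symmetry: μ A = μ B, and A ∪ B = univ
  have hABeq : μ A = μ B := toSphere_neg_half v
  have hcover : A ∪ B = Set.univ := by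
    ext u; simp only [Set.mem_union, hA, hB, Set.mem_setOf_eq, Set.mem_univ, iff_true]
    exact le_total _ _
  have h2 : μ Set.univ ≤ μ A * 2 := by
    calc μ Set.univ = μ (A ∪ B) := by rw [hcover]
    _ ≤ μ A + μ B := measure_union_le _ _
    _ = μ A * 2 := by rw [hABeq, mul_two]
  have hAhalf : μ Set.univ / 2 ≤ μ A := ENNReal.div_le_of_le_mul h2
  have hpre : μ Set.univ / 2 ≤ μ ((fun y : Metric.sphere (0 : EuclideanSpace ℝ (Fin n)) 1 => c + r • (y : EuclideanSpace ℝ (Fin n))) ⁻¹' S) :=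
    le_trans hAhalf (measure_mono hsub)
  have hmap : (sphereUniform n c r) S
      = (μ Set.univ)⁻¹ * μ ((fun y : Metric.sphere (0 : EuclideanSpace ℝ (Fin n)) 1 => c + r • (y : EuclideanSpace ℝ (Fin n))) ⁻¹' S) := by
    rw [sphereUniform, Measure.smul_apply, Measure.map_apply hf hSmeas, smul_eq_mul]
  have hge : (1 : ℝ≥0∞) / 2 ≤ (sphereUniform n c r) S := by
    rw [hmap]
    calc (1 : ℝ≥0∞) / 2 = (μ Set.univ)⁻¹ * (μ Set.univ / 2) := by
          rw [div_eq_mul_inv, div_eq_mul_inv, ← mul_assoc,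
            ENNReal.inv_mul_cancel h_ne_zero h_ne_top, one_mul]
    _ ≤ _ := mul_le_mul_right hpre _
  have hne_top : (sphereUniform n c r) S ≠ ⊤ := by
    rw [hmap]
    exact ENNReal.mul_ne_top (ENNReal.inv_ne_top.mpr h_ne_zero) (measure_ne_top _ _)
  have := ENNReal.toReal_mono hne_top hge
  simpa using this
end
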